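/- Potential argument with lazy updates: Let Σ̂_1 = λI with λ ≥ 1, let φ_1,...,φ_N ∈ ℝ^d with ‖φ_n‖₂ ≤ 1, set Σ̂_{n+1} = Σ̂_n + φ_n φ_nᵀ, and let σ(n) ≤ n be 'switch points' such that the determinant only grows by a factor at most 4 between consecutive switches: det(Σ̂_{n_{i+1}}) ≤ 4·det(Σ̂_{n_i}) for consecutive switch indices and det(Σ̂_{N+1}) ≤ 4·det(Σ̂_{n_last}). Then ∑_{n=1}^N φ_nᵀ Σ̂_{σ(n)}⁻¹ φ_n ≤ 3·(ln det(Σ̂_{N+1}) − ln det(Σ̂_1)). -/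

import Mathlib

open Matrix

private lemma lazyPot_scalar1 {x : ℝ} (h0 : 0 ≤ x) (h3 : x ≤ 3) :
    x ≤ 3 * Real.log (1 + x) := by
  have hlog4 : (1:ℝ) ≤ Real.log 4 := by
    rw [show (1:ℝ) = Real.log (Real.exp 1) by simp]
    apply Real.log_le_log (Real.exp_pos 1)
    have := Real.exp_one_lt_d9
    linarith
  have hconc := strictConcaveOn_log_Ioi.concaveOn
  have key : (x/3) * Real.log 4 ≤ Real.log (1 + x) := by
    have h := hconc.2 (show (1:ℝ) ∈ Set.Ioi 0 by norm_num)
      (show (4:ℝ) ∈ Set.Ioi 0 by norm_num)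
      (show (0:ℝ) ≤ 1 - x/3 by linarith)
      (show (0:ℝ) ≤ x/3 by linarith)
      (show (1 - x/3) + x/3 = 1 by ring)
    simp only [smul_eq_mul, Real.log_one, mul_zero, mul_one, zero_add] at h
    have e : 1 - x / 3 + x / 3 * 4 = 1 + x := by ring
    rw [e] at h
    linarith [h]
  nlinarith [key, hlog4, Real.log_nonneg (show (1:ℝ) ≤ 1 + x by linarith)]

private lemma lazyPot_scalar_sum {d : ℕ} (ν : Fin d → ℝ) (h0 : ∀ i, 0 ≤ ν i)
    (hp : ∏ i, (1 + ν i) ≤ 4) :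
    ∑ i, ν i ≤ 3 * Real.log (∏ i, (1 + ν i)) := by
  have h1 : ∀ i, (1:ℝ) ≤ 1 + ν i := fun i => by linarith [h0 i]
  have hbd : ∀ i ∈ Finset.univ, ν i ≤ 3 := by
    intro i _
    have hrest : (1:ℝ) ≤ ∏ j ∈ Finset.univ.erase i, (1 + ν j) := by
      calc (1:ℝ) = ∏ _j ∈ Finset.univ.erase i, (1:ℝ) := by simp
        _ ≤ ∏ j ∈ Finset.univ.erase i, (1 + ν j) :=
          Finset.prod_le_prod (fun j _ => by norm_num) (fun j _ => h1 j)
    have hsplit : (1 + ν i) * ∏ j ∈ Finset.univ.erase i, (1 + ν j) = ∏ j, (1 + ν j) :=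
      Finset.mul_prod_erase _ (fun j => 1 + ν j) (Finset.mem_univ i)
    nlinarith [h0 i, hrest, hsplit, hp]
  rw [Real.log_prod (fun i _ => by nlinarith [h1 i]), Finset.mul_sum]
  apply Finset.sum_le_sum
  intro i hi
  exact lazyPot_scalar1 (h0 i) (hbd i hi)

open scoped MatrixOrder in
private lemma lazyPot_key {d : ℕ} (S M : Matrix (Fin d) (Fin d) ℝ) (hS : S.PosDef)
    (hM : M.PosSemidef) (h4 : (S + M).det ≤ 4 * S.det) :
    Matrix.trace (M * S⁻¹) ≤ 3 * (Real.log (S + M).det - Real.log S.det) := by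
  classical
  set R := CFC.sqrt S with hRdef
  have hR : R.PosSemidef := (CFC.sqrt_nonneg S).posSemidef
  have hRR : R * R = S := CFC.sqrt_mul_sqrt_self S hS.posSemidef.nonneg
  have hdetS : 0 < S.det := hS.det_pos
  have hdetR : IsUnit R.det := by
    have h2 : R.det * R.det = S.det := by rw [← det_mul, hRR]
    have : R.det ≠ 0 := by
      intro h; rw [h, mul_zero] at h2; exact absurd h2.symm (ne_of_gt hdetS)
    exact isUnit_iff_ne_zero.mpr this
  have hRinv : R * R⁻¹ = 1 := Matrix.mul_nonsing_inv R hdetR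
  have hRinv' : R⁻¹ * R = 1 := Matrix.nonsing_inv_mul R hdetR
  set B := R⁻¹ * M * R⁻¹ with hBdef
  have hRih : (R⁻¹).IsHermitian := hR.isHermitian.inv
  have hBpsd : B.PosSemidef := by
    have := hM.conjTranspose_mul_mul_same R⁻¹
    rwa [hRih.eq] at this
  have hB : B.IsHermitian := hBpsd.isHermitian
  set ν := hB.eigenvalues with hνdef
  have hν0 : ∀ i, 0 ≤ ν i := hBpsd.eigenvalues_nonneg
  have hSinv : S⁻¹ = R⁻¹ * R⁻¹ := by rw [← hRR, Matrix.mul_inv_rev]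
  have htr : Matrix.trace (M * S⁻¹) = Matrix.trace B := by
    rw [hSinv, hBdef, ← Matrix.mul_assoc, trace_mul_comm (M * R⁻¹) R⁻¹, ← Matrix.mul_assoc]
  have hSM : S + M = R * (1 + B) * R := by
    rw [hBdef]
    have : R * (1 + R⁻¹ * M * R⁻¹) * R
        = R * R + (R * R⁻¹) * M * (R⁻¹ * R) := by noncomm_ring
    rw [this, hRinv, hRinv', hRR, one_mul, mul_one]
  set U : Matrix (Fin d) (Fin d) ℝ := (hB.eigenvectorUnitary : Matrix (Fin d) (Fin d) ℝ)
    with hUdef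
  have hUU : star U * U = 1 := Matrix.UnitaryGroup.star_mul_self _
  have hUU' : U * star U = 1 := Matrix.mem_unitaryGroup_iff.mp hB.eigenvectorUnitary.2
  have hspec : B = U * Matrix.diagonal ν * star U := by
    have := hB.spectral_theorem
    simpa using this
  have honeB : (1 : Matrix (Fin d) (Fin d) ℝ) + B
      = U * Matrix.diagonal (fun i => 1 + ν i) * star U := by
    have hdiag : Matrix.diagonal (fun i => (1:ℝ) + ν i)
        = 1 + Matrix.diagonal ν := by
      rw [← Matrix.diagonal_one, Matrix.diagonal_add]
    rw [hdiag, mul_add, add_mul, mul_one, hUU', hspec]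
  have hdet1B : (1 + B).det = ∏ i, (1 + ν i) := by
    rw [honeB, det_mul_right_comm, hUU', one_mul, Matrix.det_diagonal]
  have htrB : Matrix.trace B = ∑ i, ν i := by
    rw [hspec, trace_mul_comm, ← Matrix.mul_assoc, hUU, one_mul, Matrix.trace_diagonal]
  have hdetSM : (S + M).det = S.det * ∏ i, (1 + ν i) := by
    rw [hSM, det_mul_right_comm, det_mul, hRR, hdet1B]
  have hprod4 : ∏ i, (1 + ν i) ≤ 4 := by
    rw [hdetSM] at h4
    have := (mul_le_mul_iff_right₀ hdetS).mp (by linarith : S.det * ∏ i, (1 + ν i) ≤ S.det * 4)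
    linarith
  have hlog : Real.log (S + M).det - Real.log S.det = Real.log (∏ i, (1 + ν i)) := by
    rw [hdetSM, Real.log_mul (ne_of_gt hdetS)
      (by
      have : ∀ i, (1:ℝ) ≤ 1 + ν i := fun i => by linarith [hν0 i]
      have hpos : (0:ℝ) < ∏ i, (1 + ν i) :=
        Finset.prod_pos (fun i _ => by linarith [this i])
      exact ne_of_gt hpos)]
    ring
  rw [htr, htrB, hlog]
  exact lazyPot_scalar_sum ν hν0 hprod4

private lemma lazyPot_vecPSD {d : ℕ} (u : Fin d → ℝ) :
    (Matrix.vecMulVec u u).PosSemidef := by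
  rw [Matrix.vecMulVec_eq (Fin 1)]
  have := Matrix.posSemidef_self_mul_conjTranspose (Matrix.replicateCol (Fin 1) u)
  rwa [Matrix.conjTranspose_replicateCol, star_trivial] at this

private lemma lazyPot_trace_vecMulVec {d : ℕ} (u : Fin d → ℝ)
    (A : Matrix (Fin d) (Fin d) ℝ) :
    Matrix.trace (Matrix.vecMulVec u u * A) = u ⬝ᵥ (A *ᵥ u) := by
  simp only [Matrix.trace, Matrix.diag, Matrix.mul_apply, Matrix.vecMulVec_apply,
    dotProduct, Matrix.mulVec, Finset.mul_sum]
  rw [Finset.sum_comm]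
  congr 1; ext j; congr 1; ext i; ring

private lemma lazyPot_block {d : ℕ} (φ : ℕ → Fin d → ℝ)
    (Sig : ℕ → Matrix (Fin d) (Fin d) ℝ)
    (hSigrec : ∀ n, Sig (n + 1) = Sig n + Matrix.vecMulVec (φ n) (φ n))
    (s e : ℕ) (hse : s ≤ e) (hpos : (Sig s).PosDef)
    (hdet4 : (Sig e).det ≤ 4 * (Sig s).det) :
    ∑ k ∈ Finset.Ico s e, φ k ⬝ᵥ ((Sig s)⁻¹ *ᵥ φ k)
      ≤ 3 * (Real.log (Sig e).det - Real.log (Sig s).det) := by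
  set M := ∑ k ∈ Finset.Ico s e, Matrix.vecMulVec (φ k) (φ k) with hMdef
  have heq : Sig e = Sig s + M := by
    rw [hMdef]
    clear hdet4 hMdef
    induction e, hse using Nat.le_induction with
    | base => simp
    | succ e he ih => rw [hSigrec e, ih, Finset.sum_Ico_succ_top he, add_assoc]
  have hM : M.PosSemidef := by
    rw [hMdef]
    exact Finset.sum_induction _ _ (fun a b ha hb => ha.add hb)
      Matrix.PosSemidef.zero (fun k _ => lazyPot_vecPSD (φ k))
  have h4 : (Sig s + M).det ≤ 4 * (Sig s).det := by rw [← heq]; exact hdet4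
  have hkey := lazyPot_key (Sig s) M hpos hM h4
  have htr : Matrix.trace (M * (Sig s)⁻¹)
      = ∑ k ∈ Finset.Ico s e, φ k ⬝ᵥ ((Sig s)⁻¹ *ᵥ φ k) := by
    rw [hMdef, Finset.sum_mul, Matrix.trace_sum]
    exact Finset.sum_congr rfl (fun k _ => lazyPot_trace_vecMulVec (φ k) _)
  rw [← heq] at hkey
  rw [← htr]
  exact hkey

/-- Potential argument with lazy covariance updates: the sum of quadratic forms
with respect to the lagged inverse covariances is bounded by three times the
log-determinant increase. -/
theorem lazy_potential_argument (d N : ℕ) (lam : ℝ) (hlam : 1 ≤ lam)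
    (φ : ℕ → Fin d → ℝ) (hφ : ∀ n, ∑ i, (φ n i) ^ 2 ≤ 1)
    (Sig : ℕ → Matrix (Fin d) (Fin d) ℝ)
    (hSig1 : Sig 1 = lam • (1 : Matrix (Fin d) (Fin d) ℝ))
    (hSigrec : ∀ n, Sig (n + 1) = Sig n + Matrix.vecMulVec (φ n) (φ n))
    (σ : ℕ → ℕ)
    (hσ_le : ∀ n, σ n ≤ n) (hσ_pos : ∀ n, 1 ≤ n → 1 ≤ σ n)
    (hσ_mono : Monotone σ) (hσ_idem : ∀ n, σ (σ n) = σ n)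
    (hdet : ∀ n ∈ Finset.Icc 1 N, (Sig (n + 1)).det ≤ 4 * (Sig (σ n)).det) :
    ∑ n ∈ Finset.Icc 1 N, φ n ⬝ᵥ ((Sig (σ n))⁻¹ *ᵥ φ n) ≤
      3 * (Real.log (Sig (N + 1)).det - Real.log (Sig 1).det) := by
  have hpos : ∀ n, 1 ≤ n → (Sig n).PosDef := by
    intro n hn
    induction n, hn using Nat.le_induction with
    | base =>
      rw [hSig1, Matrix.smul_one_eq_diagonal]
      exact Matrix.posDef_diagonal_iff.mpr (fun i => by linarith)
    | succ n hn ih =>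
      rw [hSigrec n]
      exact ih.add_posSemidef (lazyPot_vecPSD (φ n))
  have main : ∀ m, m ≤ N →
      ∑ n ∈ Finset.Icc 1 m, φ n ⬝ᵥ ((Sig (σ n))⁻¹ *ᵥ φ n) ≤
        3 * (Real.log (Sig (max (σ m) 1)).det - Real.log (Sig 1).det)
        + ∑ k ∈ Finset.Ico (max (σ m) 1) (m + 1),
            φ k ⬝ᵥ ((Sig (max (σ m) 1))⁻¹ *ᵥ φ k) := by
    intro m
    induction m with
    | zero =>
      intro _
      have h0 : σ 0 = 0 := Nat.le_zero.mp (hσ_le 0)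
      simp [h0]
    | succ m ih =>
      intro hmN
      have ihm := ih (Nat.le_of_succ_le hmN)
      have hs1 : 1 ≤ σ (m + 1) := hσ_pos (m + 1) (by omega)
      have hmax1 : max (σ (m + 1)) 1 = σ (m + 1) := by omega
      have hsm_le : σ m ≤ m := hσ_le m
      have hss : max (σ m) 1 ≤ σ (m + 1) := by
        have := hσ_mono (show m ≤ m + 1 by omega); omega
      have hsle : max (σ m) 1 ≤ m + 1 := by omega
      rw [hmax1]
      rw [Finset.sum_Icc_succ_top (by omega : 1 ≤ m + 1)]
      rcases eq_or_lt_of_le hss with heq | hlt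
      · -- same block
        rw [← heq] at *
        rw [Finset.sum_Ico_succ_top hsle]
        linarith [ihm]
      · -- jump: σ (m+1) = m + 1
        have hjump : σ (m + 1) = m + 1 := by
          by_contra h
          have h2 : σ (m + 1) ≤ m := by have := hσ_le (m + 1); omega
          have h3 := hσ_mono h2
          rw [hσ_idem] at h3
          omega
        have hm1 : 1 ≤ m := by rw [hjump] at hlt; omega
        have hsm1 : 1 ≤ σ m := hσ_pos m hm1
        have hmaxm : max (σ m) 1 = σ m := by omega
        have hdet' := hdet m (Finset.mem_Icc.mpr ⟨hm1, Nat.le_of_succ_le hmN⟩)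
        have hblock := lazyPot_block φ Sig hSigrec (σ m) (m + 1)
          (by omega) (hpos _ hsm1) hdet'
        rw [hmaxm] at ihm
        rw [hjump]
        rw [Finset.sum_Ico_succ_top (le_refl (m + 1))]
        rw [Finset.Ico_self, Finset.sum_empty, zero_add]
        have hs_le_m1 : σ m ≤ m + 1 := by omega
        linarith [ihm, hblock]
  rcases Nat.eq_zero_or_pos N with h0 | hN
  · subst h0
    simp
  · have hP := main N le_rfl
    have hs1 : 1 ≤ σ N := hσ_pos N hN
    have hmax : max (σ N) 1 = σ N := by omega
    rw [hmax] at hP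
    have hdet' := hdet N (Finset.mem_Icc.mpr ⟨hN, le_rfl⟩)
    have hblock := lazyPot_block φ Sig hSigrec (σ N) (N + 1)
      (by have := hσ_le N; omega) (hpos _ hs1) hdet'
    linarith [hP, hblock]
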